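/- Let (X, μ) be a finite measure space, n a positive integer, p a real number with p > 1, and f, s, h : X → ℝ bounded measurable functions. Then for every t₀ ∈ ℝ, the function t ↦ ∫_X e^{(n−p)·t·f(x)} · |s(x) − n·t·h(x)|^p dμ(x) is differentiable at t₀, with derivative ∫_X e^{(n−p)·t₀·f(x)} · [ (n−p)·f(x)·|s(x) − n·t₀·h(x)|^p − n·p·h(x)·(s(x) − n·t₀·h(x))·|s(x) − n·t₀·h(x)|^{p−2} ] dμ(x). -/

import Mathlib

open MeasureTheory Real

private lemma ptwise_calabi {n p : ℝ} (hp : 1 < p) (fx sx hx : ℝ) (t : ℝ) :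
    HasDerivAt
      (fun t : ℝ => Real.exp ((n - p) * t * fx) * |sx - n * t * hx| ^ p)
      (Real.exp ((n - p) * t * fx) *
        ((n - p) * fx * |sx - n * t * hx| ^ p
          - n * p * hx * ((sx - n * t * hx) * |sx - n * t * hx| ^ (p - 2)))) t := by
  have he : HasDerivAt (fun t : ℝ => (n - p) * t * fx) ((n - p) * fx) t := by
    simpa [mul_assoc] using (hasDerivAt_mul_const fx).const_mul (n - p)
  have hexp := he.exp
  have hnt : HasDerivAt (fun t : ℝ => n * t * hx) (n * hx) t := by
    simpa [mul_assoc] using (hasDerivAt_mul_const hx).const_mul n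
  have hu : HasDerivAt (fun t : ℝ => sx - n * t * hx) (-(n * hx)) t := by
    exact ((hasDerivAt_const t sx).sub hnt).congr_deriv (by ring)
  have habs := (hasDerivAt_abs_rpow (sx - n * t * hx) hp).comp t hu
  have key := hexp.mul habs
  simp only [Function.comp] at key
  refine key.congr_deriv ?_
  ring

/-- differentiability of the numerator of the p-Calabi functional
along a conformal ray. -/
theorem stmt0 {X : Type*} [MeasurableSpace X] (μ : Measure X) [IsFiniteMeasure μ]
    (n : ℕ) (hn : 0 < n) (p : ℝ) (hp : 1 < p)
    (f s h : X → ℝ) (hf : Measurable f) (hs : Measurable s) (hh : Measurable h)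
    (C : ℝ) (hfb : ∀ x, |f x| ≤ C) (hsb : ∀ x, |s x| ≤ C) (hhb : ∀ x, |h x| ≤ C)
    (t₀ : ℝ) :
    HasDerivAt
      (fun t : ℝ => ∫ x, Real.exp (((n : ℝ) - p) * t * f x) * |s x - (n : ℝ) * t * h x| ^ p ∂μ)
      (∫ x, Real.exp (((n : ℝ) - p) * t₀ * f x) *
          (((n : ℝ) - p) * f x * |s x - (n : ℝ) * t₀ * h x| ^ p
            - (n : ℝ) * p * h x *
              ((s x - (n : ℝ) * t₀ * h x) * |s x - (n : ℝ) * t₀ * h x| ^ (p - 2))) ∂μ)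
      t₀ := by
  set F : ℝ → X → ℝ := fun t x =>
    Real.exp (((n : ℝ) - p) * t * f x) * |s x - (n : ℝ) * t * h x| ^ p with hF
  set F' : ℝ → X → ℝ := fun t x =>
    Real.exp (((n : ℝ) - p) * t * f x) *
      (((n : ℝ) - p) * f x * |s x - (n : ℝ) * t * h x| ^ p
        - (n : ℝ) * p * h x *
          ((s x - (n : ℝ) * t * h x) * |s x - (n : ℝ) * t * h x| ^ (p - 2))) with hF'
  set T : ℝ := |t₀| + 1 with hT
  set M : ℝ := C + (n : ℝ) * T * C with hM
  set A : ℝ := |(n : ℝ) - p| * T * C with hA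
  set K : ℝ := Real.exp A * (|(n : ℝ) - p| * C * M ^ p + (n : ℝ) * p * C * M ^ (p - 1))
    with hK
  -- measurability of F t
  have hmeasF : ∀ t : ℝ, Measurable (F t) := by
    intro t
    exact ((hf.const_mul _).exp).mul ((hs.sub (hh.const_mul ((n : ℝ) * t))).abs.pow measurable_const)
  have hmeasF' : ∀ t : ℝ, Measurable (F' t) := by
    intro t
    have hg : Measurable fun x => s x - (n : ℝ) * t * h x := hs.sub (hh.const_mul ((n : ℝ) * t))
    exact ((hf.const_mul _).exp).mul
      (((hf.const_mul _).mul (hg.abs.pow measurable_const)).sub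
        ((hh.const_mul _).mul (hg.mul (hg.abs.pow measurable_const))))
  -- basic bounds
  have hC0 : ∀ x, (0 : ℝ) ≤ C := fun x => (abs_nonneg _).trans (hfb x)
  have key_bound : ∀ x, ∀ t : ℝ, |t| ≤ T →
      Real.exp (((n : ℝ) - p) * t * f x) ≤ Real.exp A ∧
      |s x - (n : ℝ) * t * h x| ≤ M := by
    intro x t ht
    constructor
    · apply Real.exp_le_exp.mpr
      calc ((n : ℝ) - p) * t * f x ≤ |((n : ℝ) - p) * t * f x| := le_abs_self _
        _ = |(n : ℝ) - p| * |t| * |f x| := by rw [abs_mul, abs_mul]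
        _ ≤ |(n : ℝ) - p| * T * C :=
            mul_le_mul (mul_le_mul_of_nonneg_left ht (abs_nonneg _)) (hfb x)
              (abs_nonneg _) (by positivity)
    · calc |s x - (n : ℝ) * t * h x| ≤ |s x| + |(n : ℝ) * t * h x| := abs_sub _ _
        _ = |s x| + (n : ℝ) * |t| * |h x| := by
            rw [abs_mul, abs_mul, Nat.abs_cast]
        _ ≤ C + (n : ℝ) * T * C :=
            add_le_add (hsb x)
              (mul_le_mul (mul_le_mul_of_nonneg_left ht (Nat.cast_nonneg n)) (hhb x)
                (abs_nonneg _) (by positivity))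
  have hball : ∀ t ∈ Metric.ball t₀ (1:ℝ), |t| ≤ T := by
    intro t ht
    rw [Metric.mem_ball, Real.dist_eq] at ht
    calc |t| = |(t - t₀) + t₀| := by ring_nf
      _ ≤ |t - t₀| + |t₀| := abs_add_le _ _
      _ ≤ T := by rw [hT]; linarith
  -- bound on F'
  have hbound : ∀ x, ∀ t : ℝ, |t| ≤ T → ‖F' t x‖ ≤ K := by
    intro x t ht
    obtain ⟨hE, hG⟩ := key_bound x t ht
    set G : ℝ := s x - (n : ℝ) * t * h x with hGdef
    have hGp : |G| ^ p ≤ M ^ p :=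
      Real.rpow_le_rpow (abs_nonneg _) hG (by linarith)
    have hGp1 : |G| * |G| ^ (p - 2) ≤ M ^ (p - 1) := by
      have h1 : |G| * |G| ^ (p - 2) = |G| ^ (p - 1) := by
        have : |G| ^ ((1:ℝ) + (p - 2)) = |G| ^ (1:ℝ) * |G| ^ (p - 2) :=
          Real.rpow_add' (abs_nonneg _) (by intro hc; nlinarith)
        rw [show p - 1 = (1:ℝ) + (p - 2) by ring, this, Real.rpow_one]
      rw [h1]
      exact Real.rpow_le_rpow (abs_nonneg _) hG (by linarith)
    have habs : |(((n : ℝ) - p) * f x * |G| ^ p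
          - (n : ℝ) * p * h x * (G * |G| ^ (p - 2)))|
        ≤ |(n : ℝ) - p| * C * M ^ p + (n : ℝ) * p * C * M ^ (p - 1) := by
      calc |(((n : ℝ) - p) * f x * |G| ^ p - (n : ℝ) * p * h x * (G * |G| ^ (p - 2)))|
          ≤ |((n : ℝ) - p) * f x * |G| ^ p| + |(n : ℝ) * p * h x * (G * |G| ^ (p - 2))| :=
            abs_sub _ _
        _ = |(n : ℝ) - p| * |f x| * |G| ^ p
            + (n : ℝ) * p * |h x| * (|G| * |G| ^ (p - 2)) := by
            simp only [abs_mul, abs_abs, Nat.abs_cast]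
            rw [abs_of_pos (show (0:ℝ) < p by linarith),
              abs_of_nonneg (Real.rpow_nonneg (abs_nonneg G) p),
              abs_of_nonneg (Real.rpow_nonneg (abs_nonneg G) (p - 2))]
        _ ≤ |(n : ℝ) - p| * C * M ^ p + (n : ℝ) * p * C * M ^ (p - 1) := by
            gcongr ?_ + ?_
            · have h1 : |f x| * |G| ^ p ≤ C * M ^ p :=
                mul_le_mul (hfb x) hGp (Real.rpow_nonneg (abs_nonneg _) _)
                  ((abs_nonneg _).trans (hfb x))
              rw [mul_assoc, mul_assoc]
              exact mul_le_mul_of_nonneg_left h1 (abs_nonneg _)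
            · have h2 : |h x| * (|G| * |G| ^ (p - 2)) ≤ C * M ^ (p - 1) :=
                mul_le_mul (hhb x) hGp1 (by positivity)
                  ((abs_nonneg _).trans (hhb x))
              rw [mul_assoc ((n : ℝ) * p), mul_assoc ((n : ℝ) * p)]
              exact mul_le_mul_of_nonneg_left h2 (by positivity)
    have hnorm : ‖F' t x‖ = Real.exp (((n : ℝ) - p) * t * f x) *
        |(((n : ℝ) - p) * f x * |G| ^ p - (n : ℝ) * p * h x * (G * |G| ^ (p - 2)))| := by
      rw [hF']
      simp only [Real.norm_eq_abs, abs_mul, abs_of_pos (Real.exp_pos _)]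
      rfl
    rw [hnorm]
    exact mul_le_mul hE habs (abs_nonneg _) (Real.exp_pos _).le
  -- integrability of F t₀
  have hFt0_int : Integrable (F t₀) μ := by
    apply Integrable.mono' (integrable_const (Real.exp A * M ^ p))
      ((hmeasF t₀).aestronglyMeasurable)
    apply Filter.Eventually.of_forall
    intro x
    obtain ⟨hE, hG⟩ := key_bound x t₀ (by rw [hT]; linarith)
    have hGp : |s x - (n : ℝ) * t₀ * h x| ^ p ≤ M ^ p :=
      Real.rpow_le_rpow (abs_nonneg _) hG (by linarith)
    calc ‖F t₀ x‖ = Real.exp (((n : ℝ) - p) * t₀ * f x) *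
          |s x - (n : ℝ) * t₀ * h x| ^ p := by
          rw [hF]
          simp only [Real.norm_eq_abs, abs_mul, abs_of_pos (Real.exp_pos _),
            abs_of_nonneg (Real.rpow_nonneg (abs_nonneg _) p)]
      _ ≤ Real.exp A * M ^ p :=
          mul_le_mul hE hGp (Real.rpow_nonneg (abs_nonneg _) p) (Real.exp_pos _).le
  -- apply dominated differentiation
  have main := hasDerivAt_integral_of_dominated_loc_of_deriv_le
    (F := F) (F' := F') (x₀ := t₀) (bound := fun _ => K) (μ := μ)
    (Metric.ball_mem_nhds t₀ one_pos)
    (Filter.Eventually.of_forall fun t => (hmeasF t).aestronglyMeasurable)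
    hFt0_int
    ((hmeasF' t₀).aestronglyMeasurable)
    (Filter.Eventually.of_forall fun x => fun t ht => hbound x t (hball t ht))
    (integrable_const K)
    (Filter.Eventually.of_forall fun x => fun t _ =>
      ptwise_calabi hp (f x) (s x) (h x) t)
  exact main.2
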